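/- For every s ∈ ℝ and every integer n ≥ 1: all coefficients A_{n,k}(s) are non-negative, and the sequence {A_{n,k}(s)}_{k=0}^{n} is log-concave, i.e. A_{n,k}(s)² ≥ A_{n,k-1}(s) · A_{n,k+1}(s) for all 1 ≤ k ≤ n−1; consequently it is unimodal with at most two modes. -/

import Mathlib

open Finset Polynomial MeasureTheory Filter

/-- The polynomials `Pₙˢ`, defined by `P₀ˢ = 1` and
`Pₙˢ(x) = (x / nˢ) · ∑_{k=0}^{n-1} Pₖˢ(x)` for `n ≥ 1`. -/
noncomputable def Pp (s : ℝ) : ℕ → Polynomial ℝ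
  | 0 => 1
  | n + 1 => Polynomial.C ((((n + 1 : ℕ)) : ℝ) ^ s)⁻¹ * Polynomial.X *
      ∑ k ∈ (Finset.range (n + 1)).attach, Pp s k.1
  decreasing_by exact Finset.mem_range.mp k.2

/-- `A_{n,k}(s)` : the coefficient of `x^k` in `Pₙˢ(x)`. -/
noncomputable def A (n k : ℕ) (s : ℝ) : ℝ := (Pp s n).coeff k

/-- The product `∏_{j=1}^m (1 + x / jˢ)`. -/
noncomputable def Qq (s : ℝ) (m : ℕ) : Polynomial ℝ :=
  ∏ j ∈ Finset.range m, (1 + Polynomial.C ((((j + 1 : ℕ)) : ℝ) ^ s)⁻¹ * Polynomial.X)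

lemma sum_Pp (s : ℝ) (n : ℕ) : ∑ k ∈ Finset.range (n + 1), Pp s k = Qq s n := by
  induction n with
  | zero => simp [Pp, Qq]
  | succ n ih =>
      rw [Finset.sum_range_succ, ih]
      have h : Pp s (n + 1) = Polynomial.C ((((n + 1 : ℕ)) : ℝ) ^ s)⁻¹ * Polynomial.X *
          ∑ k ∈ Finset.range (n + 1), Pp s k := by
        rw [Pp]
        congr 1
        exact Finset.sum_attach _ _
      rw [h, ih]
      simp only [Qq]
      rw [Finset.prod_range_succ]
      ring

lemma Pp_eq_Q (s : ℝ) (n : ℕ) :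
    Pp s (n + 1) = Polynomial.C ((((n + 1 : ℕ)) : ℝ) ^ s)⁻¹ * Polynomial.X * Qq s n := by
  rw [Pp, ← sum_Pp s n]
  congr 1
  exact Finset.sum_attach _ _

section Seq

/-- Middle inequality for nonneg log-concave sequences with no internal zeros. -/
lemma mid_ineq (a : ℕ → ℝ) (hnn : ∀ k, 0 ≤ a k) (hz : ∀ k, a k = 0 → a (k + 1) = 0)
    (hlc : ∀ k, a k * a (k + 2) ≤ a (k + 1) ^ 2) (j : ℕ) :
    a j * a (j + 3) ≤ a (j + 1) * a (j + 2) := by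
  rcases (hnn (j + 1)).eq_or_lt with h1 | h1
  · have h2 : a (j + 2) = 0 := hz _ h1.symm
    have h3 : a (j + 3) = 0 := hz _ h2
    simp [h3, ← h1, h2]
  · rcases (hnn (j + 2)).eq_or_lt with h2 | h2
    · have h3 : a (j + 3) = 0 := hz _ h2.symm
      simp [h3, ← h2]
    · have k1 := hlc j
      have k2 := hlc (j + 1)
      nlinarith [mul_pos h1 h2, hnn j, hnn (j + 3), mul_nonneg (hnn j) (hnn (j + 3)),
        mul_le_mul k1 k2 (mul_nonneg (hnn (j + 1)) (hnn (j + 3))) (sq_nonneg _)]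

/-- One multiplication step `b = (1 + c x) * a` preserves all structural properties. -/
lemma seq_step (a b : ℕ → ℝ) (m : ℕ) (c : ℝ) (hc : 0 < c)
    (h1 : ∀ k, 0 ≤ a k) (h2 : ∀ k, k ≤ m → 0 < a k) (h3 : ∀ k, m < k → a k = 0)
    (h4 : ∀ k, a k * a (k + 2) ≤ a (k + 1) ^ 2)
    (h5 : ∀ k, k + 2 ≤ m → a k * a (k + 2) < a (k + 1) ^ 2)
    (hb0 : b 0 = a 0) (hbs : ∀ k, b (k + 1) = a (k + 1) + c * a k) :
    (∀ k, 0 ≤ b k) ∧ (∀ k, k ≤ m + 1 → 0 < b k) ∧ (∀ k, m + 1 < k → b k = 0) ∧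
    (∀ k, b k * b (k + 2) ≤ b (k + 1) ^ 2) ∧
    (∀ k, k + 2 ≤ m + 1 → b k * b (k + 2) < b (k + 1) ^ 2) := by
  have hz : ∀ k, a k = 0 → a (k + 1) = 0 := by
    intro k hk
    have : m < k := by
      by_contra h
      exact absurd hk (ne_of_gt (h2 k (le_of_not_gt h)))
    exact h3 _ (Nat.lt_succ_of_lt this)
  have hbnn : ∀ k, 0 ≤ b k := by
    intro k
    cases k with
    | zero => rw [hb0]; exact h1 0
    | succ k => rw [hbs]; exact add_nonneg (h1 _) (mul_nonneg hc.le (h1 _))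
  refine ⟨hbnn, ?_, ?_, ?_, ?_⟩
  · intro k hk
    cases k with
    | zero => rw [hb0]; exact h2 0 (Nat.zero_le m)
    | succ k =>
        rw [hbs]
        have hak : 0 < a k := h2 k (Nat.lt_succ_iff.mp hk)
        have := h1 (k + 1)
        nlinarith
  · intro k hk
    match k, hk with
    | (k + 2), hk =>
        rw [hbs]
        have e1 : a (k + 2) = 0 := h3 _ (by omega)
        have e2 : a (k + 1) = 0 := h3 _ (by omega)
        simp [e1, e2]
  · intro k
    cases k with
    | zero =>
        rw [hb0, hbs, hbs]
        nlinarith [h4 0, mul_nonneg (mul_nonneg hc.le (h1 0)) (h1 1), sq_nonneg (c * a 0)]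
    | succ j =>
        rw [hbs, hbs, hbs]
        have m1 := mid_ineq a h1 hz h4 j
        nlinarith [h4 (j + 1), mul_le_mul_of_nonneg_left m1 hc.le,
          mul_le_mul_of_nonneg_left (h4 j) (mul_nonneg hc.le hc.le)]
  · intro k hk
    cases k with
    | zero =>
        rw [hb0, hbs, hbs]
        have h00 : 0 < a 0 := h2 0 (Nat.zero_le m)
        nlinarith [h4 0, mul_nonneg (mul_nonneg hc.le (h1 0)) (h1 1),
          mul_pos (mul_pos hc hc) (mul_pos h00 h00)]
    | succ j =>
        rw [hbs, hbs, hbs]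
        have m1 := mid_ineq a h1 hz h4 j
        have s1 : a j * a (j + 2) < a (j + 1) ^ 2 := h5 j (by omega)
        nlinarith [h4 (j + 1), mul_le_mul_of_nonneg_left m1 hc.le,
          mul_lt_mul_of_pos_left s1 (mul_pos hc hc)]

end Seq

lemma Qq_coeff_zero (s : ℝ) (m : ℕ) :
    (Qq s (m + 1)).coeff 0 = (Qq s m).coeff 0 := by
  have : Qq s (m + 1) = Qq s m + Polynomial.C ((((m + 1 : ℕ)) : ℝ) ^ s)⁻¹ *
      (Polynomial.X * Qq s m) := by
    rw [Qq, Finset.prod_range_succ, ← Qq]; ring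
  rw [this]
  simp

lemma Qq_coeff_succ (s : ℝ) (m k : ℕ) :
    (Qq s (m + 1)).coeff (k + 1) =
      (Qq s m).coeff (k + 1) + ((((m + 1 : ℕ)) : ℝ) ^ s)⁻¹ * (Qq s m).coeff k := by
  have : Qq s (m + 1) = Qq s m + Polynomial.C ((((m + 1 : ℕ)) : ℝ) ^ s)⁻¹ *
      (Polynomial.X * Qq s m) := by
    rw [Qq, Finset.prod_range_succ, ← Qq]; ring
  rw [this]
  simp [Polynomial.coeff_X_mul]

lemma Qq_props (s : ℝ) (m : ℕ) :
    (∀ k, 0 ≤ (Qq s m).coeff k) ∧ (∀ k, k ≤ m → 0 < (Qq s m).coeff k) ∧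
    (∀ k, m < k → (Qq s m).coeff k = 0) ∧
    (∀ k, (Qq s m).coeff k * (Qq s m).coeff (k + 2) ≤ ((Qq s m).coeff (k + 1)) ^ 2) ∧
    (∀ k, k + 2 ≤ m → (Qq s m).coeff k * (Qq s m).coeff (k + 2) < ((Qq s m).coeff (k + 1)) ^ 2) := by
  induction m with
  | zero =>
      have h1 : Qq s 0 = 1 := by simp [Qq]
      rw [h1]
      refine ⟨?_, ?_, ?_, ?_, ?_⟩
      · intro k
        simp only [Polynomial.coeff_one]
        split <;> norm_num
      · intro k hk
        have hk0 : k = 0 := Nat.le_zero.mp hk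
        simp [hk0]
      · intro k hk
        have hk0 : k ≠ 0 := by omega
        simp [Polynomial.coeff_one, hk0]
      · intro k
        simp [Polynomial.coeff_one]
      · intro k hk
        omega
  | succ m ih =>
      obtain ⟨h1, h2, h3, h4, h5⟩ := ih
      have hc : 0 < ((((m + 1 : ℕ)) : ℝ) ^ s)⁻¹ := by
        have : (0 : ℝ) < (((m + 1 : ℕ)) : ℝ) := by positivity
        positivity
      exact seq_step (fun k => (Qq s m).coeff k) (fun k => (Qq s (m + 1)).coeff k) m _ hc
        h1 h2 h3 h4 h5 (Qq_coeff_zero s m) (fun k => Qq_coeff_succ s m k)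

lemma chain_mono (a : ℕ → ℝ) (m : ℕ) (h : ∀ k, k < m → a k ≤ a (k + 1)) :
    ∀ i j, i ≤ j → j ≤ m → a i ≤ a j := by
  intro i j hij hjm
  induction j with
  | zero => simp [Nat.le_zero.mp hij]
  | succ j ih =>
      rcases Nat.lt_or_ge i (j + 1) with h' | h'
      · exact (ih (Nat.lt_succ_iff.mp h') (by omega)).trans (h j (by omega))
      · have : i = j + 1 := le_antisymm hij h'
        rw [this]

lemma chain_anti (a : ℕ → ℝ) (m : ℕ) (h : ∀ k, m ≤ k → a (k + 1) ≤ a k) :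
    ∀ i j, m ≤ i → i ≤ j → a j ≤ a i := by
  intro i j hmi hij
  induction j with
  | zero => simp [Nat.le_zero.mp hij]
  | succ j ih =>
      rcases Nat.lt_or_ge i (j + 1) with h' | h'
      · exact (h j (by omega)).trans (ih (Nat.lt_succ_iff.mp h'))
      · have : i = j + 1 := le_antisymm hij h'
        rw [this]

/-- Abstract unimodality with at most two modes from (strict) log-concavity. -/
lemma unimodal_of_lc (a : ℕ → ℝ) (n : ℕ) (hn : 1 ≤ n)
    (hnn : ∀ k, 0 ≤ a k) (hpos : ∀ k, 1 ≤ k → k ≤ n → 0 < a k)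
    (hzero : ∀ k, n < k → a k = 0)
    (hlc : ∀ k, a k * a (k + 2) ≤ a (k + 1) ^ 2)
    (hslc : ∀ k, k + 2 ≤ n → a k * a (k + 2) < a (k + 1) ^ 2) :
    (∃ m : ℕ, m ≤ n ∧ (∀ i j : ℕ, i ≤ j → j ≤ m → a i ≤ a j) ∧
      (∀ i j : ℕ, m ≤ i → i ≤ j → j ≤ n → a j ≤ a i)) ∧
    {k : ℕ | k ≤ n ∧ ∀ j : ℕ, j ≤ n → a j ≤ a k}.ncard ≤ 2 := by
  classical
  have hex : ∃ k, k = n ∨ a (k + 1) ≤ a k := ⟨n, Or.inl rfl⟩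
  set m := Nat.find hex with hm
  have hmn : m ≤ n := Nat.find_le (Or.inl rfl)
  have hlt : ∀ k, k < m → a k < a (k + 1) := by
    intro k hk
    have := Nat.find_min hex hk
    push_neg at this
    exact this.2
  have hmono : ∀ i j : ℕ, i ≤ j → j ≤ m → a i ≤ a j :=
    chain_mono a m (fun k hk => (hlt k hk).le)
  have hstep : ∀ k, m ≤ k → a (k + 1) ≤ a k := by
    intro k hk
    induction k with
    | zero =>
        have hm0 : m = 0 := Nat.le_zero.mp hk
        have := Nat.find_spec hex
        rw [← hm, hm0] at this
        rcases this with h | h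
        · rw [← h] at hn; omega
        · exact h
    | succ k ih =>
        rcases Nat.lt_or_ge k m with h' | h'
        · -- m = k + 1
          have hmk : m = k + 1 := le_antisymm hk h'
          have := Nat.find_spec hex
          rw [← hm, hmk] at this
          rcases this with h | h
          · rw [h]
            rw [hzero (n + 1) (by omega)]
            exact hnn n
          · exact h
        · have prev : a (k + 1) ≤ a k := ih h'
          rcases (hnn (k + 1)).eq_or_lt with h0 | h0
          · have hk1 : n < k + 1 := by
              by_contra hcon
              exact absurd h0.symm (ne_of_gt (hpos (k + 1) (by omega) (by omega)))
            rw [hzero (k + 2) (by omega), ← h0]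
          · have hh := hlc k
            nlinarith [hnn (k + 2), mul_le_mul_of_nonneg_right prev (hnn (k + 2))]
  have hanti : ∀ i j : ℕ, m ≤ i → i ≤ j → a j ≤ a i :=
    chain_anti a m hstep
  constructor
  · exact ⟨m, hmn, hmono, fun i j h1 h2 _ => hanti i j h1 h2⟩
  · set M := {k : ℕ | k ≤ n ∧ ∀ j : ℕ, j ≤ n → a j ≤ a k} with hM
    have key : ∀ x ∈ M, ∀ y ∈ M, x ≤ y → y ≤ x + 1 := by
      rintro x ⟨hxn, hxmax⟩ y ⟨hyn, hymax⟩ hxy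
      by_contra hcon
      have hx2 : x + 2 ≤ y := by omega
      have hxy2 : x + 2 ≤ n := le_trans hx2 hyn
      have hs := hslc x hxy2
      have he : a y = a x := le_antisymm (hxmax y hyn) (hymax x hxn)
      have h1 : a (x + 1) ≤ a x := hxmax (x + 1) (by omega)
      have hsq : a (x + 1) ^ 2 ≤ a x ^ 2 := by nlinarith [hnn (x + 1)]
      have h2 : a x * a (x + 2) < a x ^ 2 := lt_of_lt_of_le hs hsq
      have hx0 : 0 < a x := by
        rcases (hnn x).eq_or_lt with h | h
        · exfalso
          rw [← h] at h2
          simp at h2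
        · exact h
      have h3 : a (x + 2) < a x := by nlinarith
      rcases Nat.lt_or_ge (x + 2) m with hcase | hcase
      · have := hmono x (x + 2) (by omega) (by omega)
        linarith
      · have := hanti (x + 2) y (by omega) hx2
        rw [he] at this
        linarith
    rcases Set.eq_empty_or_nonempty M with hemp | ⟨u0, hu0⟩
    · rw [hemp]; simp
    · have hne : M.Nonempty := ⟨u0, hu0⟩
      set u := sInf M with hu
      have huM : u ∈ M := Nat.sInf_mem hne
      have hsub : M ⊆ {u, u + 1} := by
        intro x hx
        have h1 : u ≤ x := Nat.sInf_le hx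
        have h2 : x ≤ u + 1 := key u huM x hx h1
        have hx2 : x = u ∨ x = u + 1 := by omega
        rcases hx2 with rfl | rfl
        · exact Set.mem_insert _ _
        · exact Set.mem_insert_of_mem _ rfl
      calc M.ncard ≤ ({u, u + 1} : Set ℕ).ncard :=
            Set.ncard_le_ncard hsub (Set.toFinite _)
        _ ≤ 2 := by
            have := Set.ncard_insert_le u ({u + 1} : Set ℕ)
            simp only [Set.ncard_singleton] at this
            omega
  -- done

/-- For every `s ∈ ℝ` and `n ≥ 1`, the coefficients `A_{n,k}(s)` are non-negative and
log-concave in `k`; consequently `{A_{n,k}(s)}_{k=0}^n` is unimodal with at most two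
modes. -/
theorem coeff_nonneg_logConcave_unimodal (s : ℝ) (n : ℕ) (hn : 1 ≤ n) :
    (∀ k : ℕ, 0 ≤ A n k s) ∧
    (∀ k : ℕ, 1 ≤ k → k ≤ n - 1 → A n (k - 1) s * A n (k + 1) s ≤ (A n k s) ^ 2) ∧
    (∃ m : ℕ, m ≤ n ∧ (∀ i j : ℕ, i ≤ j → j ≤ m → A n i s ≤ A n j s) ∧
      (∀ i j : ℕ, m ≤ i → i ≤ j → j ≤ n → A n j s ≤ A n i s)) ∧
    {k : ℕ | k ≤ n ∧ ∀ j : ℕ, j ≤ n → A n j s ≤ A n k s}.ncard ≤ 2 := by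
  obtain ⟨m, rfl⟩ : ∃ m, n = m + 1 := ⟨n - 1, by omega⟩
  set c : ℝ := ((((m + 1 : ℕ)) : ℝ) ^ s)⁻¹ with hcdef
  have hc : 0 < c := by
    have : (0 : ℝ) < (((m + 1 : ℕ)) : ℝ) := by positivity
    positivity
  obtain ⟨q1, q2, q3, q4, q5⟩ := Qq_props s m
  set a : ℕ → ℝ := fun k => A (m + 1) k s with ha
  have hA0 : a 0 = 0 := by
    simp only [ha, A, Pp_eq_Q]
    simp [mul_assoc]
  have hAs : ∀ k, a (k + 1) = c * (Qq s m).coeff k := by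
    intro k
    simp only [ha, A, Pp_eq_Q]
    rw [mul_assoc, Polynomial.coeff_C_mul, Polynomial.coeff_X_mul]
  have hnn : ∀ k, 0 ≤ a k := by
    intro k
    cases k with
    | zero => rw [hA0]
    | succ k => rw [hAs]; exact mul_nonneg hc.le (q1 k)
  have hpos : ∀ k, 1 ≤ k → k ≤ m + 1 → 0 < a k := by
    intro k hk1 hk2
    match k, hk1 with
    | (k + 1), _ =>
        rw [hAs]
        exact mul_pos hc (q2 k (by omega))
  have hzero : ∀ k, m + 1 < k → a k = 0 := by
    intro k hk
    match k, hk with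
    | (k + 1), hk =>
        rw [hAs, q3 k (by omega), mul_zero]
  have hlc : ∀ k, a k * a (k + 2) ≤ a (k + 1) ^ 2 := by
    intro k
    cases k with
    | zero =>
        rw [hA0, zero_mul]
        positivity
    | succ j =>
        rw [hAs, hAs, hAs]
        have := q4 j
        nlinarith [mul_le_mul_of_nonneg_left this (mul_nonneg hc.le hc.le)]
  have hslc : ∀ k, k + 2 ≤ m + 1 → a k * a (k + 2) < a (k + 1) ^ 2 := by
    intro k hk
    cases k with
    | zero =>
        rw [hA0, zero_mul, hAs]
        have := q2 0 (Nat.zero_le m)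
        positivity
    | succ j =>
        rw [hAs, hAs, hAs]
        have := q5 j (by omega)
        nlinarith [mul_lt_mul_of_pos_left this (mul_pos hc hc)]
  obtain ⟨hum, hmodes⟩ := unimodal_of_lc a (m + 1) (by omega) hnn hpos hzero hlc hslc
  refine ⟨hnn, ?_, hum, hmodes⟩
  intro k hk1 hk2
  match k, hk1 with
  | (j + 1), _ =>
      have := hlc j
      simpa using this
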